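/- The Kirchhoff polynomial of order k of a family u of n vectors in ℤᵖ depends only on the lattice ℤ⟨uᵀ⟩ generated by the rows of U; that is, if u and u' are two families of n vectors (in possibly different ℤᵖ, ℤᵖ') whose row spaces generate the same sublattice of ℤⁿ, then Kir_k(u;x) = Kir_k(u';x). -/

import Mathlib

open Matrix

def colSpanZ {p n : ℕ} (U : Matrix (Fin p) (Fin n) ℤ) : Submodule ℤ (Fin p → ℤ) :=
  Submodule.span ℤ (Set.range fun j => fun i => U i j)

def colSpanR {p n : ℕ} (U : Matrix (Fin p) (Fin n) ℤ) : Submodule ℝ (Fin p → ℝ) :=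
  Submodule.span ℝ (Set.range fun j => fun i => (U i j : ℝ))

noncomputable def castLM (m : ℕ) : (Fin m → ℤ) →ₗ[ℤ] (Fin m → ℝ) :=
  LinearMap.pi fun i => (Algebra.linearMap ℤ ℝ).comp (LinearMap.proj i)

noncomputable def satOf {m : ℕ} (S : Submodule ℝ (Fin m → ℝ)) : Submodule ℤ (Fin m → ℤ) :=
  (S.restrictScalars ℤ).comap (castLM m)

def IsZBasis {ι V : Type*} [AddCommGroup V] [Module ℤ V] (f : ι → V) (L : Submodule ℤ V) : Prop :=
  LinearIndependent ℤ f ∧ Submodule.span ℤ (Set.range f) = L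

noncomputable def gramDet {p n : ℕ} (A : Matrix (Fin p) (Fin n) ℝ) (I : Finset (Fin n)) : ℝ :=
  ((A.submatrix id (fun j : ↥I => (j : Fin n)))ᵀ * A.submatrix id (fun j : ↥I => (j : Fin n))).det

noncomputable def covol {r q : ℕ} (f : Fin r → Fin q → ℝ) : ℝ :=
  Real.sqrt (Matrix.of fun a b => ∑ i, f a i * f b i).det

def rowSpanZ {p n : ℕ} (U : Matrix (Fin p) (Fin n) ℤ) : Submodule ℤ (Fin n → ℤ) :=
  Submodule.span ℤ (Set.range fun i => U i)

-- ## auxiliary lemmas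

lemma castLM_apply {m : ℕ} (x : Fin m → ℤ) : castLM m x = fun i => (x i : ℝ) := rfl

lemma cast_mem_span {ι : Type*} {m : ℕ} (v : ι → Fin m → ℤ) {x : Fin m → ℤ}
    (hx : x ∈ Submodule.span ℤ (Set.range v)) :
    (fun i => (x i : ℝ)) ∈ Submodule.span ℝ (Set.range fun a => fun i => ((v a i : ℝ))) := by
  induction hx using Submodule.span_induction with
  | mem y hy =>
      obtain ⟨a, rfl⟩ := hy
      exact Submodule.subset_span ⟨a, rfl⟩
  | zero =>
      have : (fun i => (((0 : Fin m → ℤ) i : ℤ) : ℝ)) = (0 : Fin m → ℝ) := by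
        funext i; simp
      rw [this]; exact (Submodule.span ℝ _).zero_mem
  | add y z hy hz ihy ihz =>
      have : (fun i => (((y + z) i : ℤ) : ℝ)) =
          (fun i => ((y i : ℤ) : ℝ)) + fun i => ((z i : ℤ) : ℝ) := by
        funext i; simp [Pi.add_apply]
      rw [this]; exact Submodule.add_mem _ ihy ihz
  | smul c y hy ihy =>
      have : (fun i => (((c • y) i : ℤ) : ℝ)) = (c : ℝ) • fun i => ((y i : ℤ) : ℝ) := by
        funext i; simp [Pi.smul_apply]
      rw [this]; exact Submodule.smul_mem _ _ ihy

lemma col_mem_satOf {p n : ℕ} (U : Matrix (Fin p) (Fin n) ℤ) (j : Fin n) :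
    (fun i => U i j) ∈ satOf (colSpanR U) := by
  simp only [satOf, Submodule.mem_comap, Submodule.restrictScalars_mem, castLM_apply]
  exact Submodule.subset_span ⟨j, rfl⟩

lemma exists_factor {p n r : ℕ} (U : Matrix (Fin p) (Fin n) ℤ)
    (G : Fin r → Fin p → ℤ) (hG : IsZBasis G (satOf (colSpanR U))) :
    ∃ M : Matrix (Fin r) (Fin n) ℤ, U = (Matrix.of fun i a => G a i) * M := by
  have h : ∀ j, ∃ c : Fin r → ℤ, (∑ a, c a • G a) = fun i => U i j := by
    intro j
    exact (Submodule.mem_span_range_iff_exists_fun ℤ).1 (hG.2 ▸ col_mem_satOf U j)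
  choose c hc using h
  refine ⟨Matrix.of fun a j => c j a, ?_⟩
  ext i j
  have := congrFun (hc j) i
  simp only [Finset.sum_apply, Pi.smul_apply, smul_eq_mul] at this
  rw [Matrix.mul_apply, ← this]
  simp [Matrix.of_apply, mul_comm]


lemma satOf_smul_mem {m : ℕ} (S : Submodule ℝ (Fin m → ℝ)) {c : ℤ} (hc : c ≠ 0)
    {y : Fin m → ℤ} (hy : c • y ∈ satOf S) : y ∈ satOf S := by
  have hc' : (c : ℝ) ≠ 0 := Int.cast_ne_zero.2 hc
  have h1 : castLM m (c • y) ∈ S := hy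
  rw [LinearMap.map_smul, ← Int.cast_smul_eq_zsmul ℝ] at h1
  have h2 := S.smul_mem ((c : ℝ)⁻¹) h1
  rw [smul_smul, inv_mul_cancel₀ hc', one_smul] at h2
  exact h2

lemma exists_dual_ext {m r : ℕ} (S : Submodule ℝ (Fin m → ℝ)) (G : Fin r → Fin m → ℤ)
    (hG : IsZBasis G (satOf S)) (a : Fin r) :
    ∃ w : Fin m → ℤ, ∀ b, (∑ i, w i * G b i) = if b = a then 1 else 0 := by
  set L := satOf S with hL
  have hQtf : NoZeroSMulDivisors ℤ ((Fin m → ℤ) ⧸ L) := by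
    refine ⟨fun {c q} h => ?_⟩
    by_cases hc : c = 0
    · exact Or.inl hc
    · obtain ⟨y, rfl⟩ := Submodule.Quotient.mk_surjective L q
      refine Or.inr ?_
      rw [← Submodule.Quotient.mk_smul, Submodule.Quotient.mk_eq_zero] at h
      rw [Submodule.Quotient.mk_eq_zero]
      exact satOf_smul_mem S hc h
  have hQfin : Module.Finite ℤ ((Fin m → ℤ) ⧸ L) :=
    Module.Finite.of_surjective L.mkQ (Submodule.mkQ_surjective L)
  have hQfree : Module.Free ℤ ((Fin m → ℤ) ⧸ L) :=
    Module.free_of_finite_type_torsion_free'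
  obtain ⟨s, hs⟩ := L.mkQ.exists_rightInverse_of_surjective
    (LinearMap.range_eq_top.2 (Submodule.mkQ_surjective L))
  set σ : (Fin m → ℤ) →ₗ[ℤ] (Fin m → ℤ) := LinearMap.id - s ∘ₗ L.mkQ with hσ
  have hmem : ∀ x : Fin m → ℤ, σ x ∈ Submodule.span ℤ (Set.range G) := by
    intro x
    rw [hG.2]
    have h1 : L.mkQ (s (L.mkQ x)) = L.mkQ x := by
      have := congrArg (fun f => f (L.mkQ x)) hs
      simpa using this
    have h2 : L.mkQ (σ x) = 0 := by
      simp only [hσ, LinearMap.sub_apply, LinearMap.id_apply, LinearMap.comp_apply,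
        map_sub, h1, sub_self]
    rwa [Submodule.mkQ_apply, Submodule.Quotient.mk_eq_zero] at h2
  set ρ : (Fin m → ℤ) →ₗ[ℤ] ↥(Submodule.span ℤ (Set.range G)) :=
    LinearMap.codRestrict _ σ hmem with hρ
  have hρG : ∀ b, (ρ (G b) : Fin m → ℤ) = G b := by
    intro b
    have hGb : G b ∈ L := hG.2 ▸ Submodule.subset_span ⟨b, rfl⟩
    have h0 : L.mkQ (G b) = 0 := by rwa [Submodule.mkQ_apply, Submodule.Quotient.mk_eq_zero]
    simp only [hρ, LinearMap.codRestrict_apply, hσ, LinearMap.sub_apply, LinearMap.id_apply,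
      LinearMap.comp_apply, h0, map_zero, sub_zero]
  set bL : Module.Basis (Fin r) ℤ ↥(Submodule.span ℤ (Set.range G)) := Module.Basis.span hG.1 with hbL
  set F : (Fin m → ℤ) →ₗ[ℤ] ℤ := (bL.coord a) ∘ₗ ρ with hF
  refine ⟨fun i => F (fun j => if i = j then 1 else 0), fun b => ?_⟩
  have hFG : F (G b) = if b = a then 1 else 0 := by
    have h1 : ρ (G b) = bL b := by
      apply Subtype.ext
      rw [hρG b, hbL, Module.Basis.span_apply]
    rw [hF, LinearMap.comp_apply, h1, Module.Basis.coord_apply, bL.repr_self,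
      Finsupp.single_apply]
  calc (∑ i, F (fun j => if i = j then 1 else 0) * G b i)
      = F (G b) := by
        rw [LinearMap.pi_apply_eq_sum_univ F (G b)]
        exact Finset.sum_congr rfl fun i _ => by rw [smul_eq_mul, mul_comm]
    _ = _ := hFG

lemma rowSpan_factor_eq {p n r : ℕ} (U : Matrix (Fin p) (Fin n) ℤ)
    (G : Fin r → Fin p → ℤ) (hG : IsZBasis G (satOf (colSpanR U)))
    (M : Matrix (Fin r) (Fin n) ℤ) (hM : U = (Matrix.of fun i a => G a i) * M) :
    rowSpanZ M = rowSpanZ U := by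
  apply le_antisymm
  · rw [rowSpanZ, Submodule.span_le]
    rintro _ ⟨a, rfl⟩
    obtain ⟨w, hw⟩ := exists_dual_ext (colSpanR U) G hG a
    have hMa : M a = ∑ i, w i • U i := by
      funext j
      have : (∑ i, w i • U i) j = ∑ i, w i * U i j := by simp
      rw [this]
      have : ∀ i, U i j = ∑ b, G b i * M b j := by
        intro i; rw [hM, Matrix.mul_apply]; rfl
      simp_rw [this, Finset.mul_sum]
      rw [Finset.sum_comm]
      have : ∀ b, (∑ i, w i * (G b i * M b j)) = (∑ i, w i * G b i) * M b j := by
        intro b; rw [Finset.sum_mul]; exact Finset.sum_congr rfl fun i _ => by ring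
      simp_rw [this, hw]
      simp
    show M a ∈ rowSpanZ U
    rw [hMa]
    exact Submodule.sum_mem _ fun i _ =>
      Submodule.smul_mem _ _ (Submodule.subset_span ⟨i, rfl⟩)
  · rw [rowSpanZ, Submodule.span_le]
    rintro _ ⟨i, rfl⟩
    have : U i = ∑ a, G a i • M a := by
      funext j; rw [hM]; simp [Matrix.mul_apply]
    show U i ∈ rowSpanZ M
    rw [this]
    exact Submodule.sum_mem _ fun a _ =>
      Submodule.smul_mem _ _ (Submodule.subset_span ⟨a, rfl⟩)

-- rank of a real matrix = finrank of the span of its rows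
lemma rank_eq_finrank_rowSpan {p n : ℕ} (A : Matrix (Fin p) (Fin n) ℝ) :
    A.rank = Module.finrank ℝ (Submodule.span ℝ (Set.range fun i => A i)) := by
  rw [← Matrix.rank_transpose, Matrix.rank, Matrix.range_mulVecLin]
  congr 1

lemma rowSpanR_eq_of_rowSpanZ_eq {p p' n : ℕ} (U : Matrix (Fin p) (Fin n) ℤ)
    (U' : Matrix (Fin p') (Fin n) ℤ) (h : rowSpanZ U = rowSpanZ U') :
    Submodule.span ℝ (Set.range fun i => (U.map (Int.cast : ℤ → ℝ)) i)
      = Submodule.span ℝ (Set.range fun i => (U'.map (Int.cast : ℤ → ℝ)) i) := by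
  have key : ∀ {q q' : ℕ} (V : Matrix (Fin q) (Fin n) ℤ) (V' : Matrix (Fin q') (Fin n) ℤ),
      rowSpanZ V ≤ rowSpanZ V' →
      Submodule.span ℝ (Set.range fun i => (V.map (Int.cast : ℤ → ℝ)) i)
        ≤ Submodule.span ℝ (Set.range fun i => (V'.map (Int.cast : ℤ → ℝ)) i) := by
    intro q q' V V' hle
    rw [Submodule.span_le]
    rintro _ ⟨i, rfl⟩
    have h1 : V i ∈ rowSpanZ V' := hle (Submodule.subset_span ⟨i, rfl⟩)
    have h2 := cast_mem_span (fun i' => V' i') h1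
    exact h2
  exact le_antisymm (key U U' h.le) (key U' U h.ge)

lemma rows_linearIndependent {r n : ℕ} (A : Matrix (Fin r) (Fin n) ℝ) (hA : A.rank = r) :
    LinearIndependent ℝ (fun a => A a) := by
  rw [linearIndependent_iff_card_eq_finrank_span, Fintype.card_fin, Set.finrank]
  rw [rank_eq_finrank_rowSpan] at hA
  exact hA.symm

lemma matrix_cancel_right {s r n : ℕ} (A : Matrix (Fin r) (Fin n) ℝ)
    (hA : LinearIndependent ℝ (fun a => A a)) (X Y : Matrix (Fin s) (Fin r) ℝ)
    (h : X * A = Y * A) : X = Y := by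
  ext i b
  have h1 : ∀ j, (∑ a, (X i a - Y i a) * A a j) = 0 := by
    intro j
    have := congrFun (congrFun h i) j
    rw [Matrix.mul_apply, Matrix.mul_apply] at this
    simp [sub_mul, Finset.sum_sub_distrib, this]
  have h2 : (∑ a, (X i a - Y i a) • A a) = 0 := by
    funext j
    simpa using h1 j
  have := Fintype.linearIndependent_iff.1 hA _ h2
  have := this b
  linarith [this]

lemma exists_transition {r r' n : ℕ} (M : Matrix (Fin r) (Fin n) ℤ)
    (M' : Matrix (Fin r') (Fin n) ℤ) (h : rowSpanZ M' ≤ rowSpanZ M) :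
    ∃ C : Matrix (Fin r') (Fin r) ℤ, M' = C * M := by
  have : ∀ a, ∃ c : Fin r → ℤ, (∑ b, c b • M b) = M' a := by
    intro a
    exact (Submodule.mem_span_range_iff_exists_fun ℤ).1 (h (Submodule.subset_span ⟨a, rfl⟩))
  choose c hc using this
  refine ⟨Matrix.of c, ?_⟩
  ext a j
  have := congrFun (hc a) j
  simp only [Finset.sum_apply, Pi.smul_apply, smul_eq_mul] at this
  rw [Matrix.mul_apply, ← this]
  rfl

lemma gram_posdef {r q : ℕ} (f : Fin r → Fin q → ℝ) (hf : LinearIndependent ℝ f) :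
    (Matrix.of fun a b => ∑ i, f a i * f b i).PosDef := by
  set A : Matrix (Fin q) (Fin r) ℝ := Matrix.of fun i a => f a i with hA
  have hgram : (Matrix.of fun a b => ∑ i, f a i * f b i) = Aᵀ * A := by
    ext a b; simp [Matrix.mul_apply, hA]
  rw [hgram]
  rw [Matrix.posDef_iff_dotProduct_mulVec]
  constructor
  · simpa using Matrix.isHermitian_conjTranspose_mul_self A
  · intro x hx
    have hAx : A *ᵥ x ≠ 0 := by
      intro h0
      apply hx
      have : (∑ a, x a • f a) = 0 := by
        funext i
        have := congrFun h0 i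
        simpa [Matrix.mulVec, dotProduct, hA, mul_comm] using this
      have := Fintype.linearIndependent_iff.1 hf x this
      funext a; exact this a
    have hexpand : dotProduct (star x) ((Aᵀ * A) *ᵥ x) = ∑ i, (A *ᵥ x) i * (A *ᵥ x) i := by
      rw [← Matrix.mulVec_mulVec]
      simp [dotProduct, Matrix.mulVec, dotProduct, Matrix.transpose_apply,
        Finset.mul_sum, Finset.sum_mul]
      rw [Finset.sum_comm]
      exact Finset.sum_congr rfl fun i _ => Finset.sum_congr rfl fun a _ =>
        Finset.sum_congr rfl fun b _ => by ring
    rw [hexpand]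
    have hnz : ∃ i, (A *ᵥ x) i ≠ 0 := by
      by_contra hall
      push_neg at hall
      exact hAx (funext hall)
    obtain ⟨i0, hi0⟩ := hnz
    have : (0:ℝ) < ∑ i, (A *ᵥ x) i * (A *ᵥ x) i := by
      apply Finset.sum_pos' (fun i _ => mul_self_nonneg _)
      exact ⟨i0, Finset.mem_univ _, mul_self_pos.2 hi0⟩
    exact this

lemma gramDet_factor {p n r : ℕ} (U : Matrix (Fin p) (Fin n) ℤ) (G : Fin r → Fin p → ℤ)
    (M : Matrix (Fin r) (Fin n) ℤ) (hM : U = (Matrix.of fun i a => G a i) * M)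
    (I : Finset (Fin n)) (e : ↥I ≃ Fin r) :
    gramDet (U.map (Int.cast : ℤ → ℝ)) I
      = ((((M.map (Int.cast : ℤ → ℝ)).submatrix id ((↑) : ↥I → Fin n)).submatrix
            (e : ↥I → Fin r) id).det) ^ 2
        * (Matrix.of fun a b => ∑ i, (G a i : ℝ) * (G b i : ℝ)).det := by
  set Gr : Matrix (Fin p) (Fin r) ℝ := Matrix.of fun i a => (G a i : ℝ) with hGr
  set Mr : Matrix (Fin r) (Fin n) ℝ := M.map (Int.cast : ℤ → ℝ) with hMr
  have h1 : U.map (Int.cast : ℤ → ℝ) = Gr * Mr := by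
    ext i j
    rw [Matrix.map_apply, hM]
    simp only [Matrix.mul_apply, Matrix.of_apply, hGr, hMr, Matrix.map_apply]
    push_cast
    rfl
  set S : Matrix (Fin r) ↥I ℝ := Mr.submatrix id ((↑) : ↥I → Fin n) with hS
  have h2 : (U.map (Int.cast : ℤ → ℝ)).submatrix id ((↑) : ↥I → Fin n) = Gr * S := by
    ext i j
    simp [h1, Matrix.mul_apply, hS]
  set Q : Matrix (Fin r) (Fin r) ℝ := Grᵀ * Gr with hQ
  have hQgram : Q = Matrix.of fun a b => ∑ i, (G a i : ℝ) * (G b i : ℝ) := by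
    ext a b
    simp [hQ, Matrix.mul_apply, hGr]
  set T : Matrix ↥I ↥I ℝ := S.submatrix (e : ↥I → Fin r) id with hT
  have h3 : gramDet (U.map (Int.cast : ℤ → ℝ)) I = (Sᵀ * Q * S).det := by
    rw [gramDet, h2, Matrix.transpose_mul, hQ]
    congr 1
    rw [Matrix.mul_assoc, Matrix.mul_assoc, Matrix.mul_assoc]
  have h4 : Sᵀ * Q * S = Tᵀ * Q.submatrix (e : ↥I → Fin r) (e : ↥I → Fin r) * T := by
    ext i j
    simp only [Matrix.mul_apply, Matrix.transpose_apply, Matrix.submatrix_apply, hT, id_eq,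
      Finset.sum_mul]
    refine Fintype.sum_equiv e.symm _ _ fun v => ?_
    refine Fintype.sum_equiv e.symm _ _ fun u => ?_
    simp
  rw [h3, h4, Matrix.det_mul, Matrix.det_mul, Matrix.det_transpose,
    Matrix.det_submatrix_equiv_self e Q, hQgram]
  ring

lemma map_mul_int {a b c : ℕ} (A : Matrix (Fin a) (Fin b) ℤ) (B : Matrix (Fin b) (Fin c) ℤ) :
    (A * B).map (Int.cast : ℤ → ℝ) = A.map (Int.cast : ℤ → ℝ) * B.map (Int.cast : ℤ → ℝ) := by
  ext i j
  simp only [Matrix.map_apply, Matrix.mul_apply]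
  push_cast
  rfl

lemma castG_indep {p n r : ℕ} (U : Matrix (Fin p) (Fin n) ℤ)
    (hr : (U.map (Int.cast : ℤ → ℝ)).rank = r)
    (G : Fin r → Fin p → ℤ) (hG : IsZBasis G (satOf (colSpanR U))) :
    LinearIndependent ℝ (fun a => fun i => ((G a i : ℤ) : ℝ)) := by
  have hspan : Submodule.span ℝ (Set.range fun a => fun i => ((G a i : ℤ) : ℝ))
      = colSpanR U := by
    apply le_antisymm
    · rw [Submodule.span_le]
      rintro _ ⟨a, rfl⟩
      have h1 : G a ∈ satOf (colSpanR U) := hG.2 ▸ Submodule.subset_span ⟨a, rfl⟩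
      exact h1
    · rw [colSpanR, Submodule.span_le]
      rintro _ ⟨j, rfl⟩
      have h1 : (fun i => U i j) ∈ Submodule.span ℤ (Set.range G) :=
        hG.2.symm ▸ col_mem_satOf U j
      exact cast_mem_span G h1
  have hfin : Module.finrank ℝ (colSpanR U) = r := by
    have hEq : LinearMap.range (U.map (Int.cast : ℤ → ℝ)).mulVecLin = colSpanR U := by
      rw [Matrix.range_mulVecLin]
      rfl
    rw [← hr, Matrix.rank, hEq]
  rw [linearIndependent_iff_card_eq_finrank_span, Fintype.card_fin, Set.finrank, hspan, hfin]

lemma side_eval {p n r k m : ℕ} (hkm : k = m + m)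
    (U : Matrix (Fin p) (Fin n) ℤ)
    (G : Fin r → Fin p → ℤ)
    (hGind : LinearIndependent ℝ (fun a => fun i => ((G a i : ℤ) : ℝ)))
    (M : Matrix (Fin r) (Fin n) ℤ)
    (hM : U = (Matrix.of fun i a => G a i) * M) (x : Fin n → ℝ) :
    (1 / covol (fun a => fun i => (G a i : ℝ)) ^ k) *
        ∑ I ∈ Finset.univ.filter (fun I : Finset (Fin n) => I.card = r),
          Real.sqrt (gramDet (U.map (Int.cast : ℤ → ℝ)) I) ^ k * ∏ i ∈ I, x i
      = ∑ I ∈ Finset.univ.filter (fun I : Finset (Fin n) => I.card = r),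
          (if h : I.card = r then
            ((((M.map (Int.cast : ℤ → ℝ)).submatrix id ((↑) : ↥I → Fin n)).submatrix
              ((Finset.equivFinOfCardEq h) : ↥I → Fin r) id).det ^ k) * ∏ i ∈ I, x i
          else 0) := by
  set g : ℝ := (Matrix.of fun a b => ∑ i, (G a i : ℝ) * (G b i : ℝ)).det with hg
  have hgpos : 0 < g := (gram_posdef _ hGind).det_pos
  have hcov : covol (fun a => fun i => (G a i : ℝ)) ^ k = g ^ m := by
    rw [covol, hkm, pow_add, ← mul_pow, Real.mul_self_sqrt hgpos.le]
  have hterm : ∀ I ∈ Finset.univ.filter (fun I : Finset (Fin n) => I.card = r),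
      Real.sqrt (gramDet (U.map (Int.cast : ℤ → ℝ)) I) ^ k * ∏ i ∈ I, x i
        = g ^ m * (if h : I.card = r then
            ((((M.map (Int.cast : ℤ → ℝ)).submatrix id ((↑) : ↥I → Fin n)).submatrix
              ((Finset.equivFinOfCardEq h) : ↥I → Fin r) id).det ^ k) * ∏ i ∈ I, x i
          else 0) := by
    intro I hI
    rw [Finset.mem_filter] at hI
    rw [dif_pos hI.2]
    set e : ↥I ≃ Fin r := Finset.equivFinOfCardEq hI.2 with he
    have hfac := gramDet_factor U G M hM I e
    set d : ℝ := (((M.map (Int.cast : ℤ → ℝ)).submatrix id ((↑) : ↥I → Fin n)).submatrix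
        (e : ↥I → Fin r) id).det with hd
    rw [hfac, ← hg]
    have hs : Real.sqrt (d ^ 2 * g) ^ k = d ^ k * g ^ m := by
      rw [hkm, pow_add, ← mul_pow, Real.mul_self_sqrt (by positivity)]
      ring
    rw [hs]
    ring
  rw [Finset.sum_congr rfl hterm, ← Finset.mul_sum, hcov, ← mul_assoc, one_div,
    inv_mul_cancel₀ (pow_ne_zero _ hgpos.ne'), one_mul]

lemma det_rel {n r : ℕ} (M M' : Matrix (Fin r) (Fin n) ℤ) (C : Matrix (Fin r) (Fin r) ℤ)
    (hC : M' = C * M) (I : Finset (Fin n)) (e : ↥I ≃ Fin r) :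
    (((M'.map (Int.cast : ℤ → ℝ)).submatrix id ((↑) : ↥I → Fin n)).submatrix
        (e : ↥I → Fin r) id).det
      = (C.det : ℝ) * (((M.map (Int.cast : ℤ → ℝ)).submatrix id ((↑) : ↥I → Fin n)).submatrix
        (e : ↥I → Fin r) id).det := by
  have key : ((M'.map (Int.cast : ℤ → ℝ)).submatrix id ((↑) : ↥I → Fin n)).submatrix
        (e : ↥I → Fin r) id
      = ((C.map (Int.cast : ℤ → ℝ)).submatrix (e : ↥I → Fin r) (e : ↥I → Fin r)) *
        (((M.map (Int.cast : ℤ → ℝ)).submatrix id ((↑) : ↥I → Fin n)).submatrix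
          (e : ↥I → Fin r) id) := by
    ext i j
    simp only [Matrix.submatrix_apply, Matrix.map_apply, Matrix.mul_apply, id_eq, hC]
    push_cast
    refine Fintype.sum_equiv e.symm _ _ fun u => ?_
    simp
  have hdm : (C.map (Int.cast : ℤ → ℝ)).det = (C.det : ℝ) := by
    have h := RingHom.map_det (Int.castRingHom ℝ) C
    simpa [RingHom.mapMatrix_apply] using h.symm
  rw [key, Matrix.det_mul, Matrix.det_submatrix_equiv_self e, hdm]

/-- the Kirchhoff polynomial of order `k` only depends on the lattice
generated by the rows of `U`.  Covolumes of the saturated lattices `⟨u⟩_ℤ`, `⟨u'⟩_ℤ`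
are computed from given ℤ-bases `G`, `G'`. -/
theorem kirchhoff_depends_only_on_row_lattice {p p' n r r' k : ℕ} (hk : Even k)
    (U : Matrix (Fin p) (Fin n) ℤ) (U' : Matrix (Fin p') (Fin n) ℤ)
    (hr : (U.map (Int.cast : ℤ → ℝ)).rank = r)
    (hr' : (U'.map (Int.cast : ℤ → ℝ)).rank = r')
    (hrow : rowSpanZ U = rowSpanZ U')
    (G : Fin r → (Fin p → ℤ)) (hG : IsZBasis G (satOf (colSpanR U)))
    (G' : Fin r' → (Fin p' → ℤ)) (hG' : IsZBasis G' (satOf (colSpanR U')))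
    (x : Fin n → ℝ) :
    (1 / covol (fun a => fun i => (G a i : ℝ)) ^ k) *
        ∑ I ∈ Finset.univ.filter (fun I : Finset (Fin n) => I.card = r),
          Real.sqrt (gramDet (U.map (Int.cast : ℤ → ℝ)) I) ^ k * ∏ i ∈ I, x i
      = (1 / covol (fun a => fun i => (G' a i : ℝ)) ^ k) *
        ∑ I ∈ Finset.univ.filter (fun I : Finset (Fin n) => I.card = r'),
          Real.sqrt (gramDet (U'.map (Int.cast : ℤ → ℝ)) I) ^ k * ∏ i ∈ I, x i := by
  obtain ⟨m, hm⟩ := hk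
  have hrr : r = r' := by
    rw [← hr, ← hr', rank_eq_finrank_rowSpan, rank_eq_finrank_rowSpan,
      rowSpanR_eq_of_rowSpanZ_eq U U' hrow]
  subst hrr
  obtain ⟨M, hM⟩ := exists_factor U G hG
  obtain ⟨M', hM'⟩ := exists_factor U' G' hG'
  have hGind := castG_indep U hr G hG
  have hGind' := castG_indep U' hr' G' hG'
  rw [side_eval hm U G hGind M hM x, side_eval hm U' G' hGind' M' hM' x]
  have hMM' : rowSpanZ M' = rowSpanZ M := by
    rw [rowSpan_factor_eq U' G' hG' M' hM', rowSpan_factor_eq U G hG M hM, hrow]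
  obtain ⟨C, hC⟩ := exists_transition M M' hMM'.le
  obtain ⟨D, hD⟩ := exists_transition M' M hMM'.ge
  have hUrf : U.map (Int.cast : ℤ → ℝ)
      = (Matrix.of fun i a => (G a i : ℝ)) * M.map (Int.cast : ℤ → ℝ) := by
    rw [hM, map_mul_int]
    rfl
  have hrankM : (M.map (Int.cast : ℤ → ℝ)).rank = r := by
    apply le_antisymm
    · simpa using Matrix.rank_le_card_height (M.map (Int.cast : ℤ → ℝ))
    · calc r = (U.map (Int.cast : ℤ → ℝ)).rank := hr.symm
        _ = ((Matrix.of fun i a => (G a i : ℝ)) * M.map (Int.cast : ℤ → ℝ)).rank := by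
            rw [hUrf]
        _ ≤ _ := Matrix.rank_mul_le_right _ _
  have hind := rows_linearIndependent _ hrankM
  have hDC : D * C = 1 := by
    have h1 : (D * C) * M = M := by rw [Matrix.mul_assoc, ← hC, ← hD]
    have h2 : ((D * C).map (Int.cast : ℤ → ℝ)) * (M.map (Int.cast : ℤ → ℝ))
        = (1 : Matrix (Fin r) (Fin r) ℝ) * (M.map (Int.cast : ℤ → ℝ)) := by
      rw [Matrix.one_mul, ← map_mul_int, h1]
    have h3 := matrix_cancel_right _ hind _ _ h2
    ext i j
    apply Int.cast_injective (α := ℝ)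
    have h4 := congrFun (congrFun h3 i) j
    simp only [Matrix.map_apply] at h4
    rw [h4]
    simp [Matrix.one_apply, apply_ite (Int.cast : ℤ → ℝ)]
  have hCD1 : C.det * D.det = 1 := by
    have h5 := congrArg Matrix.det hDC
    rw [Matrix.det_mul, Matrix.det_one] at h5
    rw [mul_comm]
    exact h5
  have hCunit : IsUnit C.det := IsUnit.of_mul_eq_one _ hCD1
  have hCsq : (C.det : ℝ) * (C.det : ℝ) = 1 := by
    rcases Int.isUnit_iff.1 hCunit with h | h <;> rw [h] <;> norm_num
  apply Finset.sum_congr rfl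
  intro I hI
  rw [Finset.mem_filter] at hI
  rw [dif_pos hI.2, dif_pos hI.2]
  congr 1
  rw [det_rel M M' C hC I (Finset.equivFinOfCardEq hI.2), mul_pow]
  have hpow : (C.det : ℝ) ^ k = 1 := by rw [hm, pow_add, ← mul_pow, hCsq, one_pow]
  rw [hpow, one_mul]
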